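/- Let (P,λ) be a marked poset with λ(P*) = {c_0 < c_1 < ⋯ < c_k}, c_0 = 0, and let ω_1 be the indicator of the filter λ^{-1}([c_1,∞)). For any 0 < ε ≤ c_1 and any x ∈ O(P,λ), the points y and z defined by y_p = min{x_p, ε} and z_p = max{0, x_p − ε} (for all p ∈ P) satisfy y ∈ O(P, ε·ω_1), z ∈ O(P, λ − ε·ω_1), and x = y + z. -/
import Mathlib


/-- The marked order polyhedron `O(P,λ) ⊆ ℝ^P`. -/
def MO {P : Type*} [PartialOrder P] (Pstar : Set P) (lam : P → ℝ) : Set (P → ℝ) :=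
  {x | (∀ a ∈ Pstar, x a = lam a) ∧ ∀ p q : P, p ≤ q → x p ≤ x q}

/-- with `λ(P*) = {c₀ < ⋯ < c_k}`, `c₀ = 0`, `ω₁` the indicator of the
filter `λ⁻¹([c₁,∞))` and `0 < ε ≤ c₁`, every `x ∈ O(P,λ)` decomposes as `x = y + z` with
`y_p = min{x_p, ε} ∈ O(P, ε·ω₁)` and `z_p = max{0, x_p - ε} ∈ O(P, λ - ε·ω₁)`. -/
theorem mo_min_max_decomposition {P : Type*} [PartialOrder P] [Fintype P]
    (Pstar : Set P) (lam : P → ℝ)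
    (hmin : ∀ p : P, IsMin p → p ∈ Pstar)
    (hlam : MonotoneOn lam Pstar)
    (k : ℕ) (hk : 1 ≤ k) (c : ℕ → ℝ) (hc : ∀ i < k, c i < c (i + 1))
    (him : lam '' Pstar = c '' Set.Iic k) (hc0 : c 0 = 0)
    (ω1 : P → ℝ) (hω1 : ω1 = fun a => if c 1 ≤ lam a then 1 else 0)
    (ε : ℝ) (hε : 0 < ε) (hεc : ε ≤ c 1)
    (x : P → ℝ) (hx : x ∈ MO Pstar lam) :
    (fun p => min (x p) ε) ∈ MO Pstar (fun p => ε * ω1 p) ∧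
    (fun p => max 0 (x p - ε)) ∈ MO Pstar (fun p => lam p - ε * ω1 p) ∧
    x = fun p => min (x p) ε + max 0 (x p - ε) := by
  obtain ⟨hxm, hxmono⟩ := hx
  -- c is monotone on Iic k
  have hcmono : ∀ i j, i ≤ j → j ≤ k → c i ≤ c j := by
    intro i j hij hjk
    induction j with
    | zero => simp_all
    | succ n ih =>
      rcases Nat.lt_succ_iff_lt_or_eq.mp (Nat.lt_succ_of_le hij) with h | h
      · exact le_trans (ih (Nat.lt_succ_iff.mp h) (le_trans (Nat.le_succ n) hjk))
          (le_of_lt (hc n (Nat.lt_of_succ_le hjk)))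
      · subst h; rfl
  -- key dichotomy: for a ∈ Pstar, lam a = 0 or c 1 ≤ lam a
  have hdich : ∀ a ∈ Pstar, lam a = 0 ∨ c 1 ≤ lam a := by
    intro a ha
    have : lam a ∈ c '' Set.Iic k := him ▸ ⟨a, ha, rfl⟩
    obtain ⟨i, hik, hci⟩ := this
    rcases Nat.eq_zero_or_pos i with h0 | h1
    · left; rw [← hci, h0, hc0]
    · right; rw [← hci]; exact hcmono 1 i h1 hik
  have key1 : ∀ a ∈ Pstar, min (lam a) ε = ε * ω1 a := by
    intro a ha
    rcases hdich a ha with h | h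
    · rw [hω1]; simp only [h]
      rw [if_neg (by linarith), mul_zero, min_eq_left (le_of_lt hε)]
    · rw [hω1]; simp only [if_pos h, mul_one]
      exact min_eq_right (le_trans hεc h)
  have key2 : ∀ a ∈ Pstar, max 0 (lam a - ε) = lam a - ε * ω1 a := by
    intro a ha
    rcases hdich a ha with h | h
    · rw [hω1]; simp only [h]
      rw [if_neg (by linarith), mul_zero, sub_zero, max_eq_left (by linarith)]
    · rw [hω1]; simp only [if_pos h, mul_one]
      exact max_eq_right (by linarith)
  refine ⟨⟨fun a ha => by show min (x a) ε = ε * ω1 a; rw [hxm a ha]; exact key1 a ha,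
      fun p q hpq => min_le_min (hxmono p q hpq) le_rfl⟩,
    ⟨fun a ha => by show max 0 (x a - ε) = lam a - ε * ω1 a; rw [hxm a ha]; exact key2 a ha,
      fun p q hpq => max_le_max le_rfl (by linarith [hxmono p q hpq])⟩,
    ?_⟩
  funext p
  rcases le_total (x p) ε with h | h
  · rw [min_eq_left h, max_eq_left (by linarith)]; ring
  · rw [min_eq_right h, max_eq_right (by linarith)]; ring
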